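/- Let I be a nonempty index set, {ρ_i}_{i∈I} star-shaped risk measures with representations ρ_i(X) = min_{γ∈Γ_i} γ(X) for sets Γ_i of convex risk measures (minima attained), let A be a nonempty set and (X_a)_{a∈A} a family of elements of 𝒳. Then inf_{a∈A} sup_{i∈I} ρ_i(X_a) = inf_{γ ∈ Γ̃_I} inf_{a∈A} γ(X_a), where Γ̃_I = ∩_{i∈I} Γ̃_i. Moreover, a* ∈ A minimizes a ↦ sup_{i∈I} ρ_i(X_a) over A if and only if there exists γ* ∈ Γ̃_I such that (a*, γ*) minimizes (a, γ) ↦ γ(X_a) over A × Γ̃_I. -/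
import Mathlib


open BoundedContinuousFunction

def IsRiskMeasure {Ω : Type*} [TopologicalSpace Ω] (ρ : (Ω →ᵇ ℝ) → ℝ) : Prop :=
  (∀ X Y : Ω →ᵇ ℝ, Y ≤ X → ρ Y ≤ ρ X) ∧
  (∀ (X : Ω →ᵇ ℝ) (m : ℝ), ρ (X - const Ω m) = ρ X - m) ∧
  ρ 0 = 0

def IsStarShaped {Ω : Type*} [TopologicalSpace Ω] (ρ : (Ω →ᵇ ℝ) → ℝ) : Prop :=
  ∀ (X : Ω →ᵇ ℝ) (l : ℝ), 1 < l → l * ρ X ≤ ρ (l • X)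

def IsConvex {Ω : Type*} [TopologicalSpace Ω] (ρ : (Ω →ᵇ ℝ) → ℝ) : Prop :=
  ∀ (X Y : Ω →ᵇ ℝ) (t : ℝ), t ∈ Set.Icc (0 : ℝ) 1 →
    ρ (t • X + (1 - t) • Y) ≤ t * ρ X + (1 - t) * ρ Y

/-- The relaxation `Γ̃` of a set `Γ` of convex risk measures. -/
def relaxation {Ω : Type*} [TopologicalSpace Ω] (Γ : Set ((Ω →ᵇ ℝ) → ℝ)) :
    Set ((Ω →ᵇ ℝ) → ℝ) :=
  {g | (IsRiskMeasure g ∧ IsConvex g) ∧ ∀ X : Ω →ᵇ ℝ, ∃ γ ∈ Γ, γ X ≤ g X}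

namespace RobustAux

/-- sup over a shifted family -/
lemma ciSup_sub_const {κ : Type*} [Nonempty κ] {f : κ → ℝ}
    (h : BddAbove (Set.range f)) (m : ℝ) : (⨆ k, (f k - m)) = (⨆ k, f k) - m := by
  apply le_antisymm
  · exact ciSup_le fun k => sub_le_sub_right (le_ciSup h k) m
  · rw [sub_le_iff_le_add]
    refine ciSup_le fun k => ?_
    have hb : BddAbove (Set.range fun k => f k - m) := by
      obtain ⟨b, hb⟩ := h
      exact ⟨b - m, by rintro y ⟨k, rfl⟩; exact sub_le_sub_right (hb ⟨k, rfl⟩) m⟩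
    have := le_ciSup hb k
    linarith

lemma ciInf_sub_const {κ : Type*} [Nonempty κ] {f : κ → ℝ}
    (h : BddBelow (Set.range f)) (m : ℝ) : (⨅ k, (f k - m)) = (⨅ k, f k) - m := by
  have hb : BddBelow (Set.range fun k => f k - m) := by
    obtain ⟨b, hb⟩ := h
    exact ⟨b - m, by rintro y ⟨k, rfl⟩; exact sub_le_sub_right (hb ⟨k, rfl⟩) m⟩
  apply le_antisymm
  · refine le_of_forall_pos_le_add fun ε hε => ?_
    obtain ⟨k, hk⟩ : ∃ k, f k < (⨅ k, f k) + ε :=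
      exists_lt_of_ciInf_lt (by linarith [lt_add_of_pos_right (⨅ k, f k) hε])
    have := ciInf_le hb k
    linarith
  · exact le_ciInf fun k => sub_le_sub_right (ciInf_le h k) m

variable {Ω : Type*} [TopologicalSpace Ω] [Nonempty Ω]

/-- The auxiliary sup functional. -/
noncomputable def S (Z₀ : Ω →ᵇ ℝ) (l : ℝ) (X : Ω →ᵇ ℝ) : ℝ :=
  ⨆ ω, (X ω - l * Z₀ ω)

lemma bddAbove_S (Z₀ : Ω →ᵇ ℝ) (l : ℝ) (X : Ω →ᵇ ℝ) :
    BddAbove (Set.range fun ω => X ω - l * Z₀ ω) := by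
  have : (fun ω => X ω - l * Z₀ ω) = fun ω => (X - l • Z₀) ω := by
    funext ω; simp
  rw [this]
  exact (X - l • Z₀).isBounded_range.bddAbove

lemma le_S (Z₀ : Ω →ᵇ ℝ) (l : ℝ) (X : Ω →ᵇ ℝ) (ω : Ω) :
    X ω - l * Z₀ ω ≤ S Z₀ l X :=
  le_ciSup (bddAbove_S Z₀ l X) ω

lemma S_mono (Z₀ : Ω →ᵇ ℝ) (l : ℝ) {X Y : Ω →ᵇ ℝ} (h : Y ≤ X) :
    S Z₀ l Y ≤ S Z₀ l X :=
  ciSup_le fun ω => (sub_le_sub_right (h ω) _).trans (le_S Z₀ l X ω)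

lemma S_sub_const (Z₀ : Ω →ᵇ ℝ) (l : ℝ) (X : Ω →ᵇ ℝ) (m : ℝ) :
    S Z₀ l (X - const Ω m) = S Z₀ l X - m := by
  have h1 : S Z₀ l (X - const Ω m) = ⨆ ω, ((X ω - l * Z₀ ω) - m) := by
    unfold S; congr 1; funext ω; simp; ring
  rw [h1, ciSup_sub_const (bddAbove_S Z₀ l X) m]
  rfl

/-- The convex envelope candidate. -/
noncomputable def g (Z₀ : Ω →ᵇ ℝ) (X : Ω →ᵇ ℝ) : ℝ :=
  ⨅ l : Set.Icc (0:ℝ) 1, S Z₀ l X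

lemma lb_S (Z₀ : Ω →ᵇ ℝ) {l : ℝ} (hl : l ∈ Set.Icc (0:ℝ) 1) (X : Ω →ᵇ ℝ) :
    X (Classical.arbitrary Ω) - |Z₀ (Classical.arbitrary Ω)| ≤ S Z₀ l X := by
  set ω := Classical.arbitrary Ω
  refine le_trans ?_ (le_S Z₀ l X ω)
  have h1 : l * Z₀ ω ≤ |Z₀ ω| := by
    rcases le_or_gt (Z₀ ω) 0 with h | h
    · nlinarith [hl.1, hl.2, abs_nonneg (Z₀ ω)]
    · nlinarith [hl.1, hl.2, le_abs_self (Z₀ ω)]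
  linarith

lemma bddBelow_g (Z₀ : Ω →ᵇ ℝ) (X : Ω →ᵇ ℝ) :
    BddBelow (Set.range fun l : Set.Icc (0:ℝ) 1 => S Z₀ l X) := by
  refine ⟨X (Classical.arbitrary Ω) - |Z₀ (Classical.arbitrary Ω)|, ?_⟩
  rintro y ⟨⟨l, hl⟩, rfl⟩
  exact lb_S Z₀ hl X

lemma g_le (Z₀ : Ω →ᵇ ℝ) {l : ℝ} (hl : l ∈ Set.Icc (0:ℝ) 1) (X : Ω →ᵇ ℝ) :
    g Z₀ X ≤ S Z₀ l X :=
  ciInf_le (bddBelow_g Z₀ X) ⟨l, hl⟩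

lemma g_mono (Z₀ : Ω →ᵇ ℝ) {X Y : Ω →ᵇ ℝ} (h : Y ≤ X) : g Z₀ Y ≤ g Z₀ X :=
  le_ciInf fun l => (g_le Z₀ l.2 Y).trans (S_mono Z₀ l h)

lemma g_sub_const (Z₀ : Ω →ᵇ ℝ) (X : Ω →ᵇ ℝ) (m : ℝ) :
    g Z₀ (X - const Ω m) = g Z₀ X - m := by
  unfold g
  have : (fun l : Set.Icc (0:ℝ) 1 => S Z₀ l (X - const Ω m))
      = fun l : Set.Icc (0:ℝ) 1 => S Z₀ l X - m := by
    funext l; exact S_sub_const Z₀ l X m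
  rw [this, ciInf_sub_const (bddBelow_g Z₀ X) m]

lemma g_convex (Z₀ : Ω →ᵇ ℝ) : IsConvex (g Z₀) := by
  intro X Y t ht
  refine le_of_forall_pos_le_add fun ε hε => ?_
  obtain ⟨l₁, hl₁⟩ : ∃ l : Set.Icc (0:ℝ) 1, S Z₀ l X < g Z₀ X + ε :=
    exists_lt_of_ciInf_lt (by linarith [lt_add_of_pos_right (g Z₀ X) hε] : g Z₀ X < g Z₀ X + ε)
  obtain ⟨l₂, hl₂⟩ : ∃ l : Set.Icc (0:ℝ) 1, S Z₀ l Y < g Z₀ Y + ε :=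
    exists_lt_of_ciInf_lt (by linarith [lt_add_of_pos_right (g Z₀ Y) hε] : g Z₀ Y < g Z₀ Y + ε)
  set l : ℝ := t * l₁ + (1 - t) * l₂ with hl_def
  have hlmem : l ∈ Set.Icc (0:ℝ) 1 := by
    constructor
    · nlinarith [l₁.2.1, l₂.2.1, ht.1, ht.2]
    · nlinarith [l₁.2.2, l₂.2.2, ht.1, ht.2]
  have hmid : S Z₀ l (t • X + (1 - t) • Y) ≤ t * S Z₀ (l₁ : ℝ) X + (1 - t) * S Z₀ (l₂ : ℝ) Y := by
    refine ciSup_le fun ω => ?_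
    have e1 : (t • X + (1 - t) • Y) ω - l * Z₀ ω
        = t * (X ω - l₁ * Z₀ ω) + (1 - t) * (Y ω - l₂ * Z₀ ω) := by
      simp [hl_def]; ring
    rw [e1]
    have := le_S Z₀ l₁ X ω
    have := le_S Z₀ l₂ Y ω
    nlinarith [ht.1, ht.2]
  have := (g_le Z₀ hlmem (t • X + (1 - t) • Y)).trans hmid
  nlinarith [ht.1, ht.2]

end RobustAux

open RobustAux in
theorem robust_optimization_of_star_shaped_risk_measures
    {Ω : Type*} [TopologicalSpace Ω] [DiscreteTopology Ω] [Nonempty Ω]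
    {ι : Type*} [Nonempty ι]
    (ρ : ι → (Ω →ᵇ ℝ) → ℝ)
    (hrm : ∀ i, IsRiskMeasure (ρ i)) (hss : ∀ i, IsStarShaped (ρ i))
    (Γ : ι → Set ((Ω →ᵇ ℝ) → ℝ))
    (hΓ : ∀ i, ∀ γ ∈ Γ i, IsRiskMeasure γ ∧ IsConvex γ)
    (hrep : ∀ i, ∀ X : Ω →ᵇ ℝ, IsLeast {y : ℝ | ∃ γ ∈ Γ i, y = γ X} (ρ i X))
    {A : Type*} [Nonempty A] (Xf : A → (Ω →ᵇ ℝ)) :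
    -- the robust minimization problem reduces to convex risk measures
    (sInf {y : ℝ | ∃ a : A, y = ⨆ i, ρ i (Xf a)} =
      sInf {y : ℝ | ∃ γ ∈ ⋂ i, relaxation (Γ i), ∃ a : A, y = γ (Xf a)}) ∧
    -- characterization of the minimizers
    (∀ a' : A,
      ((∀ a : A, (⨆ i, ρ i (Xf a')) ≤ ⨆ i, ρ i (Xf a)) ↔
        ∃ γ' ∈ ⋂ i, relaxation (Γ i),
          ∀ a : A, ∀ γ ∈ ⋂ i, relaxation (Γ i), γ' (Xf a') ≤ γ (Xf a))) := by
  -- basic facts about risk measures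
  have hconst : ∀ i (m : ℝ), ρ i (const Ω m) = m := by
    intro i m
    have h := (hrm i).2.1 (const Ω m) m
    have h0 : const Ω m - const Ω m = (0 : Ω →ᵇ ℝ) := sub_self _
    rw [h0, (hrm i).2.2] at h
    linarith
  have hub : ∀ i (X : Ω →ᵇ ℝ), ρ i X ≤ ‖X‖ := by
    intro i X
    have hle : X ≤ const Ω ‖X‖ := fun ω =>
      (le_abs_self (X ω)).trans (X.norm_coe_le_norm ω)
    calc ρ i X ≤ ρ i (const Ω ‖X‖) := (hrm i).1 _ _ hle
      _ = ‖X‖ := hconst i _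
  have hbddA : ∀ X : Ω →ᵇ ℝ, BddAbove (Set.range fun i => ρ i X) := fun X =>
    ⟨‖X‖, by rintro y ⟨i, rfl⟩; exact hub i X⟩
  set ρbar : (Ω →ᵇ ℝ) → ℝ := fun X => ⨆ i, ρ i X with hρbar
  have h_le_bar : ∀ i (X : Ω →ᵇ ℝ), ρ i X ≤ ρbar X := fun i X =>
    le_ciSup (hbddA X) i
  -- the key inequality : each ρ i is dominated by S (Z₀ Z) l
  set Z₀ : (Ω →ᵇ ℝ) → (Ω →ᵇ ℝ) := fun Z => Z - const Ω (ρbar Z) with hZ₀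
  have key : ∀ (Z : Ω →ᵇ ℝ) (i : ι) {l : ℝ}, l ∈ Set.Icc (0:ℝ) 1 →
      ∀ X : Ω →ᵇ ℝ, ρ i X ≤ S (Z₀ Z) l X := by
    intro Z i l hl X
    set m := S (Z₀ Z) l X with hm
    have hXle : X ≤ l • (Z₀ Z) + const Ω m := by
      intro ω
      show X ω ≤ (l • Z₀ Z + const Ω m) ω
      have := le_S (Z₀ Z) l X ω
      simp only [coe_add, coe_smul, Pi.add_apply, Pi.smul_apply, smul_eq_mul, const_apply]
      linarith
    have hZ0 : ρ i (Z₀ Z) ≤ 0 := by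
      rw [hZ₀]
      simp only
      rw [(hrm i).2.1]
      linarith [h_le_bar i Z]
    have hlZ : ρ i (l • (Z₀ Z)) ≤ 0 := by
      rcases eq_or_lt_of_le hl.1 with h0 | h0
      · rw [← h0, zero_smul]; exact le_of_eq (hrm i).2.2
      rcases eq_or_lt_of_le hl.2 with h1 | h1
      · rw [h1, one_smul]; exact hZ0
      · have hinv : (1:ℝ) < 1 / l := by
          rw [lt_div_iff₀ h0]; linarith
        have hstar := hss i (l • (Z₀ Z)) (1/l) hinv
        have hsmul : (1/l) • (l • (Z₀ Z)) = Z₀ Z := by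
          rw [smul_smul, one_div, inv_mul_cancel₀ (ne_of_gt h0), one_smul]
        rw [hsmul] at hstar
        nlinarith
    have htr : ρ i (l • (Z₀ Z) + const Ω m) = ρ i (l • (Z₀ Z)) + m := by
      have h := (hrm i).2.1 (l • (Z₀ Z) + const Ω m) m
      have h0 : l • (Z₀ Z) + const Ω m - const Ω m = l • (Z₀ Z) := by
        rw [add_sub_cancel_right]
      rw [h0] at h
      linarith
    calc ρ i X ≤ ρ i (l • (Z₀ Z) + const Ω m) := (hrm i).1 _ _ hXle
      _ = ρ i (l • (Z₀ Z)) + m := htr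
      _ ≤ m := by linarith
  -- g (Z₀ Z) belongs to the intersection of the relaxations
  have i₀ : ι := Classical.arbitrary ι
  have hbar_le_g : ∀ (Z X : Ω →ᵇ ℝ), ρbar X ≤ g (Z₀ Z) X := by
    intro Z X
    exact ciSup_le fun i => le_ciInf fun l => key Z i l.2 X
  have gmem : ∀ Z : Ω →ᵇ ℝ, g (Z₀ Z) ∈ ⋂ i, relaxation (Γ i) := by
    intro Z
    rw [Set.mem_iInter]
    intro i
    refine ⟨⟨⟨fun X Y h => g_mono (Z₀ Z) h, fun X m => g_sub_const (Z₀ Z) X m, ?_⟩,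
      g_convex (Z₀ Z)⟩, ?_⟩
    · -- normalization
      apply le_antisymm
      · refine (g_le (Z₀ Z) (Set.left_mem_Icc.2 zero_le_one) 0).trans ?_
        unfold S
        simp
      · have := (hrm i₀).2.2 ▸ le_ciInf fun l : Set.Icc (0:ℝ) 1 => key Z i₀ l.2 0
        calc (0:ℝ) = ρ i₀ 0 := ((hrm i₀).2.2).symm
          _ ≤ g (Z₀ Z) 0 := le_ciInf fun l => key Z i₀ l.2 0
    · intro X
      obtain ⟨γ, hγ, hval⟩ := (hrep i X).1
      exact ⟨γ, hγ, hval ▸ le_ciInf fun l => key Z i l.2 X⟩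
  have g_at : ∀ Z : Ω →ᵇ ℝ, g (Z₀ Z) Z = ρbar Z := by
    intro Z
    apply le_antisymm
    · refine (g_le (Z₀ Z) (Set.right_mem_Icc.2 zero_le_one) Z).trans ?_
      have : S (Z₀ Z) 1 Z = ⨆ _ : Ω, ρbar Z := by
        unfold S; congr 1; funext ω; simp [hZ₀]
      rw [this, ciSup_const]
    · exact hbar_le_g Z Z
  -- functions in the intersection dominate ρbar
  have L1 : ∀ γ, γ ∈ (⋂ i, relaxation (Γ i)) → ∀ X : Ω →ᵇ ℝ, ρbar X ≤ γ X := by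
    intro γ hγ X
    refine ciSup_le fun i => ?_
    have hγi := (Set.mem_iInter.1 hγ) i
    obtain ⟨γ₀, hγ₀, hle⟩ := hγi.2 X
    exact ((hrep i X).2 ⟨γ₀, hγ₀, rfl⟩).trans hle
  constructor
  · -- the equality of the two infima
    set S₁ : Set ℝ := {y | ∃ a : A, y = ⨆ i, ρ i (Xf a)} with hS₁
    set S₂ : Set ℝ := {y | ∃ γ ∈ ⋂ i, relaxation (Γ i), ∃ a : A, y = γ (Xf a)} with hS₂
    have a₀ : A := Classical.arbitrary A
    have hne₁ : S₁.Nonempty := ⟨_, a₀, rfl⟩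
    have hne₂ : S₂.Nonempty := ⟨_, g (Z₀ (Xf a₀)), gmem _, a₀, rfl⟩
    -- every element of S₂ dominates an element of S₁ and conversely
    have h21 : ∀ y ∈ S₂, ∃ x ∈ S₁, x ≤ y := by
      rintro y ⟨γ, hγ, a, rfl⟩
      exact ⟨ρbar (Xf a), ⟨a, rfl⟩, L1 γ hγ (Xf a)⟩
    have h12 : ∀ x ∈ S₁, ∃ y ∈ S₂, y ≤ x := by
      rintro x ⟨a, rfl⟩
      exact ⟨g (Z₀ (Xf a)) (Xf a), ⟨g (Z₀ (Xf a)), gmem _, a, rfl⟩, le_of_eq (g_at (Xf a))⟩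
    by_cases hbb : BddBelow S₁
    · have hbb₂ : BddBelow S₂ := by
        obtain ⟨b, hb⟩ := hbb
        refine ⟨b, fun y hy => ?_⟩
        obtain ⟨x, hx, hxy⟩ := h21 y hy
        exact (hb hx).trans hxy
      apply le_antisymm
      · refine le_csInf hne₂ fun y hy => ?_
        obtain ⟨x, hx, hxy⟩ := h21 y hy
        exact (csInf_le hbb hx).trans hxy
      · refine le_csInf hne₁ fun x hx => ?_
        obtain ⟨y, hy, hyx⟩ := h12 x hx
        exact (csInf_le hbb₂ hy).trans hyx
    · have hbb₂ : ¬BddBelow S₂ := by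
        intro ⟨b, hb⟩
        apply hbb
        refine ⟨b, fun x hx => ?_⟩
        obtain ⟨y, hy, hyx⟩ := h12 x hx
        exact (hb hy).trans hyx
      rw [csInf_of_not_bddBelow hbb, csInf_of_not_bddBelow hbb₂]
  · -- characterization of minimizers
    intro a'
    constructor
    · intro hmin
      refine ⟨g (Z₀ (Xf a')), gmem _, fun a γ hγ => ?_⟩
      calc g (Z₀ (Xf a')) (Xf a') = ρbar (Xf a') := g_at _
        _ ≤ ρbar (Xf a) := hmin a
        _ ≤ γ (Xf a) := L1 γ hγ _
    · rintro ⟨γ', hγ', hopt⟩ a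
      calc ρbar (Xf a') ≤ γ' (Xf a') := L1 γ' hγ' _
        _ ≤ g (Z₀ (Xf a)) (Xf a) := hopt a _ (gmem _)
        _ = ρbar (Xf a) := g_at _
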